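/- Let ū and u be open-loop controls, μ̄ and μ solutions of the FPK equation for ū and for u respectively with the same initial law ϑ, and p̄ a bounded C^{1,2} function (with bounded ∂_t p̄, ∇_x p̄, ∇²_x p̄) satisfying ∂_s p̄_s(x) + ∇p̄_s(x)·f(s,x,ū(s)) + Tr(∇²p̄_s(x) D(s,x)) = 0 and p̄_T = ℓ. Assume that for almost every t ∈ I, ∫ ∇p̄_t(x)·f(t,x,u(t)) dμ_t(x) = min over υ ∈ U of ∫ ∇p̄_t(x)·f(t,x,υ) dμ_t(x). Then the descent property ∫ ℓ dμ_T ≤ ∫ ℓ dμ̄_T holds. -/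

import Mathlib

open MeasureTheory intervalIntegral

noncomputable section

/-- Euclidean space ℝⁿ. -/
abbrev Eu (n : ℕ) : Type := EuclideanSpace ℝ (Fin n)

/-- Laplacian of `φ` at `x`: the trace of the Hessian. -/
def lapl {n : ℕ} (φ : Eu n → ℝ) (x : Eu n) : ℝ :=
  ∑ i : Fin n, fderiv ℝ (fun y => fderiv ℝ φ y (EuclideanSpace.single i 1)) x
    (EuclideanSpace.single i 1)

/-- `η` is of class C^{1,2} (C¹ in time, C² in space) and bounded together with
`∂ₜη`, `∇ₓη` and `∇²ₓη`. -/
structure C12Bdd {n : ℕ} (η : ℝ → Eu n → ℝ) : Prop where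
  smooth_t : ∀ x, ContDiff ℝ 1 fun t => η t x
  smooth_x : ∀ t, ContDiff ℝ 2 (η t)
  bdd : ∃ C, ∀ t x, |η t x| ≤ C
  bdd_dt : ∃ C, ∀ t x, |deriv (fun s => η s x) t| ≤ C
  bdd_grad : ∃ C, ∀ t x, ‖gradient (η t) x‖ ≤ C
  bdd_hess : ∃ C, ∀ t x, ‖fderiv ℝ (fderiv ℝ (η t)) x‖ ≤ C

/-- `Tr(∇²φ(x) · D)`: the trace of the product of the Hessian of `φ` at `x` with the
matrix `D`. -/
def hessTr {n : ℕ} (φ : Eu n → ℝ) (x : Eu n) (D : Matrix (Fin n) (Fin n) ℝ) : ℝ :=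
  ∑ i : Fin n, ∑ j : Fin n,
    fderiv ℝ (fun y => fderiv ℝ φ y (EuclideanSpace.single j 1)) x
      (EuclideanSpace.single i 1) * D j i

/-- `μ : [0,T] → P(ℝⁿ)` is a (distributional) solution of the Fokker–Planck–Kolmogorov
equation for the open-loop control `u`, drift `f`, diffusion matrix `D`, with initial
law `ϑ`. -/
def IsFPKol {n m : ℕ} (T : ℝ) (f : ℝ → Eu n → Eu m → Eu n)
    (D : ℝ → Eu n → Matrix (Fin n) (Fin n) ℝ)
    (u : ℝ → Eu m) (ϑ : Measure (Eu n)) (μ : ℝ → Measure (Eu n)) : Prop :=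
  (∀ t, IsProbabilityMeasure (μ t)) ∧
  μ 0 = ϑ ∧
  (∀ φ : Eu n → ℝ, Continuous φ → (∃ C, ∀ x, |φ x| ≤ C) →
    Measurable fun t => ∫ x, φ x ∂μ t) ∧
  (∀ η : ℝ → Eu n → ℝ, C12Bdd η → ∀ t ∈ Set.Icc (0:ℝ) T,
    (∫ x, η t x ∂μ t) - (∫ x, η 0 x ∂μ 0) =
      ∫ s in (0:ℝ)..t, ∫ x, (deriv (fun r => η r x) s
        + (inner ℝ (gradient (η s) x) (f s x (u s)) : ℝ) + hessTr (η s) x (D s x)) ∂μ s)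

theorem descent_property_open_loop
    {n m : ℕ} (hn : 1 ≤ n) (hm : 1 ≤ m) (T : ℝ) (hT : 0 < T)
    (U : Set (Eu m)) (hUne : U.Nonempty) (hUcp : IsCompact U)
    (f : ℝ → Eu n → Eu m → Eu n)
    (hfmeas : Measurable fun p : ℝ × Eu n × Eu m => f p.1 p.2.1 p.2.2)
    (hfbdd : ∃ C, ∀ t x υ, ‖f t x υ‖ ≤ C)
    (D : ℝ → Eu n → Matrix (Fin n) (Fin n) ℝ)
    (hDcont : Continuous fun p : ℝ × Eu n => D p.1 p.2)
    (hDbdd : ∃ C, ∀ t x i j, |D t x i j| ≤ C)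
    (hDpsd : ∀ t x, (D t x).PosSemidef) (hDsymm : ∀ t x, (D t x).IsSymm)
    (ℓ : Eu n → ℝ) (hℓ : ContDiff ℝ 2 ℓ) (hℓbdd : ∃ C, ∀ x, |ℓ x| ≤ C)
    (ub : ℝ → Eu m) (hubmeas : Measurable ub) (hubU : ∀ t, ub t ∈ U)
    (u : ℝ → Eu m) (humeas : Measurable u) (huU : ∀ t, u t ∈ U)
    (ϑ : Measure (Eu n)) (μb μ : ℝ → Measure (Eu n))
    (hFPKb : IsFPKol T f D ub ϑ μb) (hFPK : IsFPKol T f D u ϑ μ)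
    (pb : ℝ → Eu n → ℝ) (hpb : C12Bdd pb)
    (hpde : ∀ s ∈ Set.Icc (0:ℝ) T, ∀ x : Eu n,
      deriv (fun r => pb r x) s + (inner ℝ (gradient (pb s) x) (f s x (ub s)) : ℝ)
        + hessTr (pb s) x (D s x) = 0)
    (hterm : ∀ x, pb T x = ℓ x)
    (hmin : ∀ᵐ t ∂(volume.restrict (Set.Icc (0:ℝ) T)), ∀ υ ∈ U,
      (∫ x, (inner ℝ (gradient (pb t) x) (f t x (u t)) : ℝ) ∂μ t) ≤
        ∫ x, (inner ℝ (gradient (pb t) x) (f t x υ) : ℝ) ∂μ t) :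
    (∫ x, ℓ x ∂μ T) ≤ ∫ x, ℓ x ∂μb T := by
  have hTmem : T ∈ Set.Icc (0:ℝ) T := ⟨hT.le, le_refl T⟩
  -- rewrite terminal integrals via hterm
  have hpbT : (fun x : Eu n => pb T x) = fun x => ℓ x := funext hterm
  -- the FPK identity for μb
  have hb := hFPKb.2.2.2 pb hpb T hTmem
  have h := hFPK.2.2.2 pb hpb T hTmem
  -- RHS for μb is zero
  have hbz : (∫ s in (0:ℝ)..T, ∫ x, (deriv (fun r => pb r x) s
        + (inner ℝ (gradient (pb s) x) (f s x (ub s)) : ℝ) + hessTr (pb s) x (D s x)) ∂μb s)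
      = 0 := by
    have : Set.EqOn (fun s => ∫ x, (deriv (fun r => pb r x) s
        + (inner ℝ (gradient (pb s) x) (f s x (ub s)) : ℝ) + hessTr (pb s) x (D s x)) ∂μb s)
        (fun _ => (0:ℝ)) (Set.uIcc (0:ℝ) T) := by
      intro s hs
      rw [Set.uIcc_of_le hT.le] at hs
      have : (fun x : Eu n => (deriv (fun r => pb r x) s
          + (inner ℝ (gradient (pb s) x) (f s x (ub s)) : ℝ) + hessTr (pb s) x (D s x)))
          = fun _ => (0:ℝ) := funext fun x => hpde s hs x
      beta_reduce
      rw [this, integral_zero]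
    rw [intervalIntegral.integral_congr this]
    simp
  rw [hbz] at hb
  -- so ∫ ℓ dμb T = ∫ pb 0 dϑ
  have hbeq : (∫ x, ℓ x ∂μb T) = ∫ x, pb 0 x ∂ϑ := by
    rw [← hpbT, ← hFPKb.2.1]
    linarith [hb]
  -- boundedness and measurability facts
  obtain ⟨Cf, hCf⟩ := hfbdd
  obtain ⟨Cg, hCg⟩ := hpb.bdd_grad
  have hCf0 : 0 ≤ Cf := le_trans (norm_nonneg _) (hCf 0 0 0)
  have hCg0 : 0 ≤ Cg := le_trans (norm_nonneg _) (hCg 0 0)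
  have hgradcont : ∀ s : ℝ, Continuous (gradient (pb s)) := by
    intro s
    have h1 : Continuous (fderiv ℝ (pb s)) := (hpb.smooth_x s).continuous_fderiv two_ne_zero
    exact (InnerProductSpace.toDual ℝ (Eu n)).symm.continuous.comp h1
  have hint : ∀ (s : ℝ) (υ : Eu m),
      Integrable (fun x : Eu n => (inner ℝ (gradient (pb s) x) (f s x υ) : ℝ)) (μ s) := by
    intro s υ
    have hm1 : Measurable fun x : Eu n => f s x υ := by
      have : Measurable fun x : Eu n => ((s, x, υ) : ℝ × Eu n × Eu m) :=
        measurable_const.prodMk (measurable_id.prodMk measurable_const)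
      exact hfmeas.comp this
    have hmeas : Measurable fun x : Eu n => (inner ℝ (gradient (pb s) x) (f s x υ) : ℝ) :=
      Measurable.inner (hgradcont s).measurable hm1
    haveI : IsProbabilityMeasure (μ s) := hFPK.1 s
    refine ⟨hmeas.aestronglyMeasurable, ?_⟩
    refine HasFiniteIntegral.of_bounded (C := Cg * Cf) (ae_of_all _ fun x => ?_)
    calc ‖(inner ℝ (gradient (pb s) x) (f s x υ) : ℝ)‖
        ≤ ‖gradient (pb s) x‖ * ‖f s x υ‖ := norm_inner_le_norm _ _
      _ ≤ Cg * Cf := mul_le_mul (hCg s x) (hCf s x υ) (norm_nonneg _) hCg0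
  -- RHS for μ is nonpositive
  have hz : (∫ s in (0:ℝ)..T, ∫ x, (deriv (fun r => pb r x) s
        + (inner ℝ (gradient (pb s) x) (f s x (u s)) : ℝ) + hessTr (pb s) x (D s x)) ∂μ s)
      ≤ 0 := by
    rw [intervalIntegral.integral_of_le hT.le]
    refine integral_nonpos_of_ae ?_
    have hmin' : ∀ᵐ t ∂(volume.restrict (Set.Ioc (0:ℝ) T)), ∀ υ ∈ U,
        (∫ x, (inner ℝ (gradient (pb t) x) (f t x (u t)) : ℝ) ∂μ t) ≤
          ∫ x, (inner ℝ (gradient (pb t) x) (f t x υ) : ℝ) ∂μ t :=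
      ae_mono (Measure.restrict_mono Set.Ioc_subset_Icc_self le_rfl) hmin
    have hmem : ∀ᵐ t ∂(volume.restrict (Set.Ioc (0:ℝ) T)), t ∈ Set.Ioc (0:ℝ) T :=
      ae_restrict_mem measurableSet_Ioc
    filter_upwards [hmin', hmem] with s hs hsmem
    simp only [Pi.zero_apply]
    have hsIcc : s ∈ Set.Icc (0:ℝ) T := Set.Ioc_subset_Icc_self hsmem
    have heq : (fun x : Eu n => (deriv (fun r => pb r x) s
        + (inner ℝ (gradient (pb s) x) (f s x (u s)) : ℝ) + hessTr (pb s) x (D s x)))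
        = fun x => (inner ℝ (gradient (pb s) x) (f s x (u s)) : ℝ)
          - (inner ℝ (gradient (pb s) x) (f s x (ub s)) : ℝ) := by
      funext x
      have := hpde s hsIcc x
      ring_nf
      ring_nf at this
      linarith
    rw [heq, integral_sub (hint s (u s)) (hint s (ub s))]
    have := hs (ub s) (hubU s)
    linarith
  -- conclude
  have heq2 : (∫ x, ℓ x ∂μ T) - ∫ x, pb 0 x ∂ϑ ≤ 0 := by
    rw [← hpbT, ← hFPK.2.1]
    rw [h]
    exact hz
  rw [hbeq]
  linarith
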